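/- With c = −2i/y, p = √3/(2sy), n = 0, and Λ = −s², the function p satisfies the second pure-radiation Einstein equation: [∂∂̄ + ∂̄∂ + c̄∂ + c∂̄ + (1/2)cc̄ + (3/4)(∂c̄ + ∂̄c)] p = (n + n̄)/p³ + (2/3)Λ p³, where ∂ and ∂̄ are the vector fields dual to μ = dx + i dy and μ̄ in the coframe (λ, μ, μ̄) with λ = (2y⁴/3)(du + y⁻³dx). -/

import Mathlib

noncomputable section

/-- Partial derivative of a complex-valued function on ℝ³ (coordinates (x,y,u)). -/
def pdC (F : (Fin 3 → ℝ) → ℂ) (v : Fin 3 → ℝ) (k : Fin 3) : ℂ :=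
  fderiv ℝ F v (Pi.single k 1)

/-- The vector field ∂ dual to μ = dx + i dy in the coframe (λ, μ, μ̄),
λ = (2y⁴/3)(du + y⁻³ dx):  ∂ = (1/2)∂_x − (i/2)∂_y − (1/(2y³))∂_u. -/
def Dmu (F : (Fin 3 → ℝ) → ℂ) (v : Fin 3 → ℝ) : ℂ :=
  (1 / 2) * pdC F v 0 - (Complex.I / 2) * pdC F v 1 - (1 / (2 * ((v 1 : ℝ) : ℂ) ^ 3)) * pdC F v 2

/-- The vector field ∂̄ dual to μ̄:  ∂̄ = (1/2)∂_x + (i/2)∂_y − (1/(2y³))∂_u. -/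
def DmuBar (F : (Fin 3 → ℝ) → ℂ) (v : Fin 3 → ℝ) : ℂ :=
  (1 / 2) * pdC F v 0 + (Complex.I / 2) * pdC F v 1 - (1 / (2 * ((v 1 : ℝ) : ℂ) ^ 3)) * pdC F v 2

/-- The vector field ∂₀ dual to λ:  ∂₀ = (3/(2y⁴))∂_u. -/
def D0 (F : (Fin 3 → ℝ) → ℂ) (v : Fin 3 → ℝ) : ℂ :=
  (3 / (2 * ((v 1 : ℝ) : ℂ) ^ 4)) * pdC F v 2

/-- c = −2i/y as a function on M. -/
def cF (v : Fin 3 → ℝ) : ℂ := -2 * Complex.I / ((v 1 : ℝ) : ℂ)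

/-- p = √3/(2sy) as a (complex-valued) function on M. -/
def pC (s : ℝ) (v : Fin 3 → ℝ) : ℂ := ((Real.sqrt 3 / (2 * s * v 1) : ℝ) : ℂ)

lemma pdC_eq (h : ℝ → ℂ) (d : ℂ) (v : Fin 3 → ℝ) (hd : HasDerivAt h d (v 1)) (k : Fin 3) :
    pdC (fun w => h (w 1)) v k = (Pi.single (M := fun _ : Fin 3 => ℝ) k 1 1 : ℝ) • d := by
  set π := ContinuousLinearMap.proj (R := ℝ) (φ := fun _ : Fin 3 => ℝ) 1 with hπdef
  have hπ : HasFDerivAt (⇑π) π v := π.hasFDerivAt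
  have hc := (hd.hasFDerivAt).comp v hπ
  rw [pdC]
  have he : (fun w : Fin 3 → ℝ => h (w 1)) = h ∘ ⇑π := rfl
  rw [he, hc.fderiv]
  simp [hπdef, ContinuousLinearMap.proj_apply]

lemma Dmu_eq (h : ℝ → ℂ) (d : ℂ) (v : Fin 3 → ℝ) (hd : HasDerivAt h d (v 1)) :
    Dmu (fun w => h (w 1)) v = -(Complex.I / 2) * d := by
  rw [Dmu, pdC_eq h d v hd, pdC_eq h d v hd, pdC_eq h d v hd]
  simp

lemma DmuBar_eq (h : ℝ → ℂ) (d : ℂ) (v : Fin 3 → ℝ) (hd : HasDerivAt h d (v 1)) :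
    DmuBar (fun w => h (w 1)) v = (Complex.I / 2) * d := by
  rw [DmuBar, pdC_eq h d v hd, pdC_eq h d v hd, pdC_eq h d v hd]
  simp

lemma hasDerivAt_ofReal (y : ℝ) : HasDerivAt (fun t : ℝ => ((t : ℝ) : ℂ)) 1 y := by
  simpa using (hasDerivAt_id y).ofReal_comp

lemma hasDerivAt_cinv (a : ℂ) {y : ℝ} (hy : y ≠ 0) :
    HasDerivAt (fun t : ℝ => a * ((t : ℂ))⁻¹) (-a / ((y:ℂ))^2) y := by
  have hinv := (hasDerivAt_inv (x := ((y:ℝ):ℂ)) (by exact_mod_cast hy)).comp y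
    (hasDerivAt_ofReal y)
  have := hinv.const_mul a
  refine this.congr_deriv ?_
  field_simp

lemma hasDerivAt_cinv2 (a : ℂ) {y : ℝ} (hy : y ≠ 0) :
    HasDerivAt (fun t : ℝ => a * (((t : ℂ))^2)⁻¹) (-2*a / ((y:ℂ))^3) y := by
  have h0 : HasDerivAt (fun t : ℝ => ((t : ℂ))^2) (2*(y:ℂ)) y := by
    have h1 := (hasDerivAt_ofReal y).mul (hasDerivAt_ofReal y)
    have he : (fun t : ℝ => ((t:ℂ))^2) = fun t : ℝ => (t:ℂ)*(t:ℂ) := by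
      funext t; ring
    rw [he]; exact h1.congr_deriv (by ring)
  have hy2 : ((y:ℂ))^2 ≠ 0 := pow_ne_zero _ (by exact_mod_cast hy)
  have hinv := (hasDerivAt_inv hy2).comp y h0
  have := hinv.const_mul a
  refine this.congr_deriv ?_
  have hyc : ((y:ℝ):ℂ) ≠ 0 := by exact_mod_cast hy
  field_simp

lemma Dmu_congr {F G : (Fin 3 → ℝ) → ℂ} {v : Fin 3 → ℝ} (h : F =ᶠ[nhds v] G) :
    Dmu F v = Dmu G v := by
  unfold Dmu pdC; rw [h.fderiv_eq]

lemma DmuBar_congr {F G : (Fin 3 → ℝ) → ℂ} {v : Fin 3 → ℝ} (h : F =ᶠ[nhds v] G) :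
    DmuBar F v = DmuBar G v := by
  unfold DmuBar pdC; rw [h.fderiv_eq]


lemma Dmu_cinv (a : ℂ) (w : Fin 3 → ℝ) (hw : w 1 ≠ 0) :
    Dmu (fun w : Fin 3 → ℝ => a * ((w 1 : ℝ) : ℂ)⁻¹) w
      = -(Complex.I / 2) * (-a / ((w 1 : ℝ) : ℂ)^2) :=
  Dmu_eq (fun t : ℝ => a * ((t:ℝ):ℂ)⁻¹) _ w (hasDerivAt_cinv a hw)

lemma DmuBar_cinv (a : ℂ) (w : Fin 3 → ℝ) (hw : w 1 ≠ 0) :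
    DmuBar (fun w : Fin 3 → ℝ => a * ((w 1 : ℝ) : ℂ)⁻¹) w
      = (Complex.I / 2) * (-a / ((w 1 : ℝ) : ℂ)^2) :=
  DmuBar_eq (fun t : ℝ => a * ((t:ℝ):ℂ)⁻¹) _ w (hasDerivAt_cinv a hw)

lemma Dmu_cinv2 (a : ℂ) (w : Fin 3 → ℝ) (hw : w 1 ≠ 0) :
    Dmu (fun w : Fin 3 → ℝ => a * (((w 1 : ℝ) : ℂ)^2)⁻¹) w
      = -(Complex.I / 2) * (-2 * a / ((w 1 : ℝ) : ℂ)^3) :=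
  Dmu_eq (fun t : ℝ => a * (((t:ℝ):ℂ)^2)⁻¹) _ w (hasDerivAt_cinv2 a hw)

lemma DmuBar_cinv2 (a : ℂ) (w : Fin 3 → ℝ) (hw : w 1 ≠ 0) :
    DmuBar (fun w : Fin 3 → ℝ => a * (((w 1 : ℝ) : ℂ)^2)⁻¹) w
      = (Complex.I / 2) * (-2 * a / ((w 1 : ℝ) : ℂ)^3) :=
  DmuBar_eq (fun t : ℝ => a * (((t:ℝ):ℂ)^2)⁻¹) _ w (hasDerivAt_cinv2 a hw)

/-- With c = −2i/y, p = √3/(2sy), n = 0 and Λ = −s², p satisfies the second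
pure-radiation Einstein equation
[∂∂̄ + ∂̄∂ + c̄∂ + c∂̄ + ½cc̄ + ¾(∂c̄ + ∂̄c)] p = (n + n̄)/p³ + (2/3)Λ p³. -/
theorem second_einstein_equation (s : ℝ) (hs : s ≠ 0) (v : Fin 3 → ℝ) (hy : v 1 ≠ 0) :
    Dmu (fun w => DmuBar (pC s) w) v + DmuBar (fun w => Dmu (pC s) w) v
      + starRingEnd ℂ (cF v) * Dmu (pC s) v + cF v * DmuBar (pC s) v
      + (1 / 2) * cF v * starRingEnd ℂ (cF v) * pC s v
      + (3 / 4) * (Dmu (fun w => starRingEnd ℂ (cF w)) v + DmuBar cF v) * pC s v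
    = ((0 : ℂ) + starRingEnd ℂ (0 : ℂ)) / (pC s v) ^ 3
        + (2 / 3) * ((-s ^ 2 : ℝ) : ℂ) * (pC s v) ^ 3 := by
  set a : ℂ := ((Real.sqrt 3 / (2 * s) : ℝ) : ℂ) with ha
  have hyc : ((v 1 : ℝ) : ℂ) ≠ 0 := by exact_mod_cast hy
  have hpC : pC s = fun w : Fin 3 → ℝ => a * ((w 1 : ℝ) : ℂ)⁻¹ := by
    funext w
    rw [pC, ha]
    rw [show Real.sqrt 3 / (2 * s * w 1) = Real.sqrt 3 / (2 * s) * (w 1)⁻¹ by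
      rw [← div_div, div_eq_mul_inv]]
    push_cast
    ring
  have hconj2I : starRingEnd ℂ (-2 * Complex.I) = 2 * Complex.I := by
    simp [map_mul, map_neg, Complex.conj_I, map_ofNat]
  have hcFbar : (fun w : Fin 3 → ℝ => starRingEnd ℂ (cF w))
      = fun w : Fin 3 → ℝ => (2 * Complex.I) * ((w 1 : ℝ) : ℂ)⁻¹ := by
    funext w
    rw [cF, map_div₀, hconj2I, Complex.conj_ofReal, div_eq_mul_inv]
  have hcF : cF = fun w : Fin 3 → ℝ => (-2 * Complex.I) * ((w 1 : ℝ) : ℂ)⁻¹ := by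
    funext w
    rw [cF, div_eq_mul_inv]
  have hDmu_p : Dmu (pC s) v = -(Complex.I / 2) * (-a / ((v 1 :ℝ):ℂ)^2) := by
    rw [hpC, Dmu_cinv a v hy]
  have hDmuBar_p : DmuBar (pC s) v = (Complex.I / 2) * (-a / ((v 1 :ℝ):ℂ)^2) := by
    rw [hpC, DmuBar_cinv a v hy]
  have hDmu_cbar : Dmu (fun w => starRingEnd ℂ (cF w)) v
      = -(Complex.I / 2) * (-(2 * Complex.I) / ((v 1 :ℝ):ℂ)^2) := by
    rw [hcFbar, Dmu_cinv _ v hy]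
  have hDmuBar_c : DmuBar cF v = (Complex.I / 2) * (-(-2 * Complex.I) / ((v 1 :ℝ):ℂ)^2) := by
    rw [hcF, DmuBar_cinv _ v hy]
  have hev : ∀ᶠ w in nhds v, w 1 ≠ 0 := (continuous_apply 1).continuousAt.eventually_ne hy
  have hDD1 : Dmu (fun w => DmuBar (pC s) w) v
      = -(Complex.I / 2) * (-2 * ((Complex.I / 2) * (-a)) / ((v 1 :ℝ):ℂ)^3) := by
    have hG : (fun w => DmuBar (pC s) w)
        =ᶠ[nhds v] fun w : Fin 3 → ℝ => ((Complex.I / 2) * (-a)) * (((w 1 : ℝ) : ℂ)^2)⁻¹ := by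
      refine hev.mono fun w hw => ?_
      have hwc : ((w 1 : ℝ) : ℂ) ≠ 0 := by exact_mod_cast hw
      simp only [hpC, DmuBar_cinv a w hw]
      field_simp
    rw [Dmu_congr hG, Dmu_cinv2 _ v hy]
  have hDD2 : DmuBar (fun w => Dmu (pC s) w) v
      = (Complex.I / 2) * (-2 * (-(Complex.I / 2) * (-a)) / ((v 1 :ℝ):ℂ)^3) := by
    have hG : (fun w => Dmu (pC s) w)
        =ᶠ[nhds v] fun w : Fin 3 → ℝ => (-(Complex.I / 2) * (-a)) * (((w 1 : ℝ) : ℂ)^2)⁻¹ := by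
      refine hev.mono fun w hw => ?_
      have hwc : ((w 1 : ℝ) : ℂ) ≠ 0 := by exact_mod_cast hw
      simp only [hpC, Dmu_cinv a w hw]
      field_simp
    rw [DmuBar_congr hG, DmuBar_cinv2 _ v hy]
  have hcFv : cF v = (-2 * Complex.I) * ((v 1 :ℝ):ℂ)⁻¹ := by rw [cF, div_eq_mul_inv]
  have hcFbarv : starRingEnd ℂ (cF v) = (2 * Complex.I) * ((v 1 :ℝ):ℂ)⁻¹ := by
    rw [cF, map_div₀, hconj2I, Complex.conj_ofReal, div_eq_mul_inv]
  have hpCv : pC s v = a * ((v 1 :ℝ):ℂ)⁻¹ := congrFun hpC v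
  have ha2 : a ^ 2 = 3 / (4 * (s:ℂ)^2) := by
    rw [ha]
    rw [show (((Real.sqrt 3 / (2 * s) : ℝ) : ℂ))^2 = (((Real.sqrt 3 ^ 2 / (4 * s^2) : ℝ)) : ℂ) by
      push_cast; ring]
    rw [Real.sq_sqrt (by norm_num : (3:ℝ) ≥ 0)]
    push_cast
    ring
  have hsc : (s : ℂ) ≠ 0 := by exact_mod_cast hs
  have ha2' : 4 * (s:ℂ)^2 * a^2 = 3 := by
    rw [ha2]; field_simp
  clear_value a
  rw [hDD1, hDD2, hDmu_p, hDmuBar_p, hDmu_cbar, hDmuBar_c, hcFbarv, hcFv, hpCv]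
  simp only [map_zero]
  have ha0 : a ≠ 0 := by rintro rfl; norm_num at ha2'
  push_cast
  field_simp
  linear_combination (12 * a ^ 4) * Complex.I_sq + (4 * a ^ 4) * ha2'
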